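/- For a (p,q)-clan γ, the permutation v_γ equals the identity and the clan polynomial specialization 𝔰_γ(0) (all y_i = 0) equals 1 if and only if γ is the rainbow clan, consisting of min(p,q) nested arcs matching i with p+q+1−i for i ≤ min(p,q) together with |p−q| unmatched signs in the middle. -/

import Mathlib

open scoped Classical
namespace ClanPaper

/-- A `(p,q)`-clan: a partial matching on `n = p+q` linearly ordered nodes,
given by the involution `m` (whose fixed points are the unmatched nodes),
with unmatched nodes signed `+` (`true`) or `-` (`false`), such that
`#(+) - #(-) = p - q`.  Signs at matched nodes are normalized to `false`. -/
structure Clan (p q : ℕ) where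
  m : Fin (p + q) → Fin (p + q)
  invol : ∀ i, m (m i) = i
  sign : Fin (p + q) → Bool
  signMatched : ∀ i, m i ≠ i → sign i = false
  balance :
    (Finset.univ.filter fun i => m i = i ∧ sign i = true).card + q =
      (Finset.univ.filter fun i => m i = i ∧ sign i = false).card + p

namespace Clan

variable {p q : ℕ}

/-- `Σ_{(i,j)-matchings, i<j} (j - i)` for the partial matching given by an
involution `m`. -/
noncomputable def arcSumAux {n : ℕ} (m : Fin n → Fin n) : ℕ :=
  ∑ i ∈ Finset.univ.filter (fun i => i < m i), ((m i : ℕ) - (i : ℕ))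

/-- The number of crossings: pairs of matchings `(i,j)`, `(k,l)` with
`i < k < j < l`. -/
noncomputable def crossingsAux {n : ℕ} (m : Fin n → Fin n) : ℕ :=
  (Finset.univ.filter fun x : Fin n × Fin n =>
    x.1 < m x.1 ∧ x.2 < m x.2 ∧ x.1 < x.2 ∧ x.2 < m x.1 ∧ m x.1 < m x.2).card

/-- `ℓ := Σ_{(i,j)-matchings} (j-i) - #crossings`, at the level of raw data. -/
noncomputable def lenAux {n : ℕ} (m : Fin n → Fin n) : ℤ :=
  (arcSumAux m : ℤ) - (crossingsAux m : ℤ)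

/-- The length `ℓ(γ)` of a clan. -/
noncomputable def len (γ : Clan p q) : ℤ := lenAux γ.m

/-- Node `i` is an unmatched `-` or a left endpoint of a matching
(these get the labels `1,…,q` in the definition of `u_γ`). -/
def IsMinusOrLeft (γ : Clan p q) (i : Fin (p + q)) : Prop :=
  (γ.m i = i ∧ γ.sign i = false) ∨ i < γ.m i

/-- Node `i` is an unmatched `+` or a left endpoint of a matching
(these get the labels `1,…,p` in the definition of `v_γ`). -/
def IsPlusOrLeft (γ : Clan p q) (i : Fin (p + q)) : Prop :=
  (γ.m i = i ∧ γ.sign i = true) ∨ i < γ.m i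

/-- `u_γ` as a `ℕ`-valued labelling (with values in `1,…,n`): the `-`s and the
left endpoints get the labels `1,…,q` from left to right, the `+`s and the
right endpoints get the labels `q+1,…,n` from left to right. -/
noncomputable def uFun (γ : Clan p q) (i : Fin (p + q)) : ℕ :=
  if γ.IsMinusOrLeft i then
    1 + (Finset.univ.filter fun j => γ.IsMinusOrLeft j ∧ j < i).card
  else
    q + 1 + (Finset.univ.filter fun j => ¬ γ.IsMinusOrLeft j ∧ j < i).card

/-- `v_γ` as a `ℕ`-valued labelling (with values in `1,…,n`): the `+`s and the
left endpoints get the labels `1,…,p` from left to right, the `-`s and the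
right endpoints get the labels `p+1,…,n` from left to right. -/
noncomputable def vFun (γ : Clan p q) (i : Fin (p + q)) : ℕ :=
  if γ.IsPlusOrLeft i then
    1 + (Finset.univ.filter fun j => γ.IsPlusOrLeft j ∧ j < i).card
  else
    p + 1 + (Finset.univ.filter fun j => ¬ γ.IsPlusOrLeft j ∧ j < i).card

/-- The transposition of `i` and `i'`, as a function. -/
def swapFun {n : ℕ} (i i' : Fin n) : Fin n → Fin n :=
  fun x => if x = i then i' else if x = i' then i else x

/-- Nodes `i`, `i'` are both unmatched and carry opposite signs. -/
def Opp (γ : Clan p q) (i i' : Fin (p + q)) : Prop :=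
  γ.m i = i ∧ γ.m i' = i' ∧ γ.sign i ≠ γ.sign i'

/-- `HeckeSpec γ i i' γ'` (for `i' = i+1`) says `γ' = s_i * γ` for the `0`-Hecke
action: if nodes `i`, `i'` carry opposite signs, they are replaced by a matching
between them; otherwise the two nodes are swapped if this increases the length,
and nothing happens if not. -/
def HeckeSpec (γ : Clan p q) (i i' : Fin (p + q)) (γ' : Clan p q) : Prop :=
  (γ.Opp i i' ∧
    (∀ x, γ'.m x = if x = i then i' else if x = i' then i else γ.m x) ∧
    (∀ x, γ'.sign x = if x = i ∨ x = i' then false else γ.sign x)) ∨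
  (¬ γ.Opp i i' ∧
    lenAux γ.m < lenAux (swapFun i i' ∘ γ.m ∘ swapFun i i') ∧
    (∀ x, γ'.m x = swapFun i i' (γ.m (swapFun i i' x))) ∧
    (∀ x, γ'.sign x = γ.sign (swapFun i i' x))) ∨
  (¬ γ.Opp i i' ∧
    ¬ lenAux γ.m < lenAux (swapFun i i' ∘ γ.m ∘ swapFun i i') ∧ γ' = γ)

end Clan
end ClanPaper

namespace ClanPaper
namespace Clan

variable {p q : ℕ}

/-- Number of vertical boundary steps (left endpoints and `+`s) strictly before
node `s`. -/
noncomputable def vCount (γ : Clan p q) (s : Fin (p + q)) : ℕ :=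
  (Finset.univ.filter fun t => γ.IsPlusOrLeft t ∧ t < s).card

/-- `shape γ i` is the length of the `i`-th row (0-indexed) of the Young
diagram `λ(γ)` inside the `p × q` rectangle: reading the southeast boundary of
`λ(γ)` from the northeast corner to the southwest corner, left endpoints and
`+`s give vertical steps and right endpoints and `-`s give horizontal steps. -/
noncomputable def shape (γ : Clan p q) (i : ℕ) : ℕ :=
  (Finset.univ.filter fun s : Fin (p + q) => ¬ γ.IsPlusOrLeft s ∧ i < γ.vCount s).card

/-- The box in row `i`, column `j` (both 0-indexed, columns from the left)
belongs to the Young diagram `λ(γ)`. -/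
def InLambda (γ : Clan p q) (i : Fin p) (j : Fin q) : Prop := (j : ℕ) < γ.shape i

/-- Column (0-indexed, from the left) of the horizontal boundary step `s`. -/
noncomputable def colOf (γ : Clan p q) (s : Fin (p + q)) : ℕ :=
  q - 1 - (Finset.univ.filter fun t => ¬ γ.IsPlusOrLeft t ∧ t < s).card

/-- The six bumpless pipe dream tiles: empty, horizontal, vertical, crossing,
SE-elbow `╭` and NW-elbow `╯`. -/
inductive Tile | empty | horiz | vert | cross | se | nw
deriving DecidableEq

instance : Fintype Tile :=
  ⟨⟨([Tile.empty, Tile.horiz, Tile.vert, Tile.cross, Tile.se, Tile.nw] : List Tile),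
    Multiset.coe_nodup.mpr (by decide)⟩, fun x => by cases x <;> simp⟩

namespace Tile
/-- the tile carries a horizontal-direction strand (E or W half-edge) -/
def hasH : Tile → Bool | horiz => true | cross => true | se => true | nw => true | _ => false
/-- the tile carries a vertical-direction strand (N or S half-edge) -/
def hasV : Tile → Bool | vert => true | cross => true | se => true | nw => true | _ => false
/-- a pipe crosses the east edge of the tile -/
def eastSel : Tile → Bool | horiz => true | cross => true | se => true | _ => false
/-- a pipe crosses the west edge of the tile -/
def westSel : Tile → Bool | horiz => true | cross => true | nw => true | _ => false
/-- a pipe crosses the south edge of the tile -/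
def southSel : Tile → Bool | vert => true | cross => true | se => true | _ => false
/-- a pipe crosses the north edge of the tile -/
def northSel : Tile → Bool | vert => true | cross => true | nw => true | _ => false
end Tile

/-- Raw data of a BPD fragment on the `p × q` rectangle: a tile in each box,
together with an optional pipe label for the vertical strand and for the
horizontal strand of the box (labels identify pipes; the pipe of an arc is
labelled by the left endpoint of the arc). -/
abbrev FragData (p q : ℕ) :=
  (Fin p → Fin q → Tile) × (Fin p → Fin q → Option (Fin (p + q))) ×
    (Fin p → Fin q → Option (Fin (p + q)))

namespace FragData

/-- the tile in box `(i,j)` -/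
def T (d : FragData p q) : Fin p → Fin q → Tile := d.1
/-- the label of the vertical strand in box `(i,j)` -/
def V (d : FragData p q) : Fin p → Fin q → Option (Fin (p + q)) := d.2.1
/-- the label of the horizontal strand in box `(i,j)` -/
def H (d : FragData p q) : Fin p → Fin q → Option (Fin (p + q)) := d.2.2

/-- label of the pipe leaving box `(i,j)` through its east edge -/
def east (d : FragData p q) (i : Fin p) (j : Fin q) : Option (Fin (p + q)) :=
  if (d.T i j).eastSel then d.H i j else none
/-- label of the pipe leaving box `(i,j)` through its west edge -/
def west (d : FragData p q) (i : Fin p) (j : Fin q) : Option (Fin (p + q)) :=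
  if (d.T i j).westSel then d.H i j else none
/-- label of the pipe leaving box `(i,j)` through its south edge -/
def south (d : FragData p q) (i : Fin p) (j : Fin q) : Option (Fin (p + q)) :=
  if (d.T i j).southSel then d.V i j else none
/-- label of the pipe leaving box `(i,j)` through its north edge -/
def north (d : FragData p q) (i : Fin p) (j : Fin q) : Option (Fin (p + q)) :=
  if (d.T i j).northSel then d.V i j else none

end FragData

/-- `d` is a bumpless pipe dream fragment of the clan `γ`: a tiling of the
Young diagram `λ(γ)` by the six BPD tiles in which labelled pipes match up
across the edges of adjacent tiles, no pipe crosses the north or west boundary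
of `λ(γ)`, and on the southeast boundary of `λ(γ)` the pipe crossing the
boundary step of a node is precisely (the pipe labelled by) the arc of `γ`
through that node; so the pipes realize the matching of `γ`. -/
def IsFragment (γ : Clan p q) (d : FragData p q) : Prop :=
  (∀ i j, ¬ γ.InLambda i j → d.T i j = Tile.empty ∧ d.V i j = none ∧ d.H i j = none) ∧
  (∀ i j, (d.V i j ≠ none ↔ (d.T i j).hasV = true) ∧
    (d.H i j ≠ none ↔ (d.T i j).hasH = true)) ∧
  (∀ i j, d.T i j = Tile.se ∨ d.T i j = Tile.nw → d.V i j = d.H i j) ∧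
  (∀ (i : Fin p) (j j' : Fin q), (j' : ℕ) = (j : ℕ) + 1 → γ.InLambda i j' →
    d.east i j = d.west i j') ∧
  (∀ (i i' : Fin p) (j : Fin q), (i' : ℕ) = (i : ℕ) + 1 → γ.InLambda i' j →
    d.south i j = d.north i' j) ∧
  (∀ (i : Fin p) (j : Fin q), (j : ℕ) = 0 → d.west i j = none) ∧
  (∀ (i : Fin p) (j : Fin q), (i : ℕ) = 0 → d.north i j = none) ∧
  (∀ (i : Fin p) (j : Fin q) (t : Fin (p + q)), γ.InLambda i j →
    (j : ℕ) + 1 = γ.shape i → γ.IsPlusOrLeft t → γ.vCount t = (i : ℕ) →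
    d.east i j = if γ.m t = t then none else some t) ∧
  (∀ (i : Fin p) (j : Fin q) (s : Fin (p + q)), γ.InLambda i j →
    (∀ i' : Fin p, (i' : ℕ) = (i : ℕ) + 1 → ¬ γ.InLambda i' j) →
    ¬ γ.IsPlusOrLeft s → γ.colOf s = (j : ℕ) →
    d.south i j = if γ.m s = s then none else some (γ.m s))

/-- The type of bumpless pipe dream fragments of `γ`. -/
def Fragment (γ : Clan p q) := {d : FragData p q // IsFragment γ d}

noncomputable instance (γ : Clan p q) : Fintype γ.Fragment :=
  Subtype.fintype _

/-- The weight of a BPD fragment: the product of `y_i - y_{n-j+1}` over the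
empty tiles `(i,j)` (1-indexed; here all indices are 0-indexed). -/
noncomputable def wt (γ : Clan p q) (d : FragData p q) :
    MvPolynomial (Fin (p + q)) ℤ :=
  ∏ x ∈ Finset.univ.filter
      (fun x : Fin p × Fin q => γ.InLambda x.1 x.2 ∧ d.T x.1 x.2 = Tile.empty),
    (MvPolynomial.X (Fin.castLE (Nat.le_add_right p q) x.1) -
      MvPolynomial.X (⟨p + q - 1 - (x.2 : ℕ), by have := x.2.isLt; omega⟩ :
        Fin (p + q)))

/-- The clan polynomial `𝔰_γ(y) = Σ_{π ∈ BPD(γ)} wt(π)`. -/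
noncomputable def clanPoly (γ : Clan p q) : MvPolynomial (Fin (p + q)) ℤ :=
  ∑ π : γ.Fragment, γ.wt π.1

end Clan
end ClanPaper

namespace ClanPaper
namespace Clan

/-- `γ` is the rainbow `(p,q)`-clan: `min(p,q)` nested arcs matching `i` with
`p+q+1-i` for `i ≤ min(p,q)`, together with `|p-q|` unmatched signs in the
middle (`+` if `p > q`, `-` if `q > p`). -/
def IsRainbow {p q : ℕ} (γ : Clan p q) : Prop :=
  (∀ i : Fin (p + q), (i : ℕ) < min p q ∨ p + q - min p q ≤ (i : ℕ) →
    (γ.m i : ℕ) = p + q - 1 - (i : ℕ)) ∧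
  (∀ i : Fin (p + q), min p q ≤ (i : ℕ) → (i : ℕ) < p + q - min p q →
    γ.m i = i ∧ γ.sign i = decide (q < p))

end Clan
end ClanPaper

namespace ClanPaper
namespace Clan

variable {p q : ℕ}

lemma card_filter_lt {n : ℕ} (k : ℕ) (hk : k ≤ n) :
    (Finset.univ.filter fun t : Fin n => (t : ℕ) < k).card = k := by
  apply Finset.card_eq_of_bijective (fun i h => (⟨i, lt_of_lt_of_le h hk⟩ : Fin n))
  · intro a ha
    simp only [Finset.mem_filter, Finset.mem_univ, true_and] at ha
    exact ⟨(a : ℕ), ha, rfl⟩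
  · intro i h; simp [h]
  · intro i j hi hj hij
    simpa using congrArg Fin.val hij

lemma card_filter_ge {n : ℕ} (k : ℕ) (hk : k ≤ n) :
    (Finset.univ.filter fun t : Fin n => k ≤ (t : ℕ)).card = n - k := by
  have h1 := Finset.card_filter_add_card_filter_not
    (s := (Finset.univ : Finset (Fin n))) (p := fun t : Fin n => (t : ℕ) < k)
  simp only [not_lt] at h1
  rw [card_filter_lt k hk] at h1
  simp only [Finset.card_univ, Fintype.card_fin] at h1
  omega

lemma card_filter_between {n : ℕ} (a b : ℕ) (hab : a ≤ b) (hb : b ≤ n) :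
    (Finset.univ.filter fun t : Fin n => a ≤ (t : ℕ) ∧ (t : ℕ) < b).card = b - a := by
  have heq : (Finset.univ.filter fun t : Fin n => a ≤ (t : ℕ) ∧ (t : ℕ) < b)
      = (Finset.univ.filter fun t : Fin n => (t : ℕ) < b)
        \ (Finset.univ.filter fun t : Fin n => (t : ℕ) < a) := by
    ext t; simp; omega
  rw [heq, Finset.card_sdiff_of_subset (by intro t; simp; omega),
    card_filter_lt b hb, card_filter_lt a (le_trans hab hb)]

lemma card_PL (γ : Clan p q) :
    (Finset.univ.filter fun i => γ.IsPlusOrLeft i).card = p := by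
  set A := Finset.univ.filter fun i : Fin (p+q) => γ.m i = i ∧ γ.sign i = true with hA
  set B := Finset.univ.filter fun i : Fin (p+q) => γ.m i = i ∧ γ.sign i = false with hB
  set L := Finset.univ.filter fun i : Fin (p+q) => i < γ.m i with hL
  set R := Finset.univ.filter fun i : Fin (p+q) => γ.m i < i with hR
  have hLR : L.card = R.card := by
    apply Finset.card_bij (fun i _ => γ.m i)
    · intro a ha
      simp only [hL, hR, Finset.mem_filter, Finset.mem_univ, true_and] at *
      rw [γ.invol]; exact ha
    · intro a _ b _ hab
      have := congrArg γ.m hab; rwa [γ.invol, γ.invol] at this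
    · intro b hb
      refine ⟨γ.m b, ?_, γ.invol b⟩
      simp only [hL, hR, Finset.mem_filter, Finset.mem_univ, true_and] at *
      rw [γ.invol]; exact hb
  have hdAB : Disjoint A B := by
    rw [Finset.disjoint_left]; intro a ha hb
    simp only [hA, hB, Finset.mem_filter] at ha hb
    rw [ha.2.2] at hb; simp at hb
  have hdAL : Disjoint A L := by
    rw [Finset.disjoint_left]; intro a ha hb
    simp only [hA, hL, Finset.mem_filter] at ha hb
    rw [ha.2.1] at hb; exact absurd hb.2 (lt_irrefl _)
  have hdAR : Disjoint A R := by
    rw [Finset.disjoint_left]; intro a ha hb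
    simp only [hA, hR, Finset.mem_filter] at ha hb
    rw [ha.2.1] at hb; exact absurd hb.2 (lt_irrefl _)
  have hdBL : Disjoint B L := by
    rw [Finset.disjoint_left]; intro a ha hb
    simp only [hB, hL, Finset.mem_filter] at ha hb
    rw [ha.2.1] at hb; exact absurd hb.2 (lt_irrefl _)
  have hdBR : Disjoint B R := by
    rw [Finset.disjoint_left]; intro a ha hb
    simp only [hB, hR, Finset.mem_filter] at ha hb
    rw [ha.2.1] at hb; exact absurd hb.2 (lt_irrefl _)
  have hdLR : Disjoint L R := by
    rw [Finset.disjoint_left]; intro a ha hb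
    simp only [hL, hR, Finset.mem_filter] at ha hb
    exact absurd (lt_trans ha.2 hb.2) (lt_irrefl _)
  have hU : (A ∪ B) ∪ (L ∪ R) = Finset.univ := by
    ext i
    simp only [hA, hB, hL, hR, Finset.mem_union, Finset.mem_filter, Finset.mem_univ, true_and,
      iff_true]
    rcases lt_trichotomy i (γ.m i) with hc | hc | hc
    · exact Or.inr (Or.inl hc)
    · cases hs : γ.sign i
      · exact Or.inl (Or.inr ⟨hc.symm, rfl⟩)
      · exact Or.inl (Or.inl ⟨hc.symm, rfl⟩)
    · exact Or.inr (Or.inr hc)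
  have hcard : A.card + B.card + (L.card + R.card) = p + q := by
    have hd2 : Disjoint (A ∪ B) (L ∪ R) := by
      rw [Finset.disjoint_union_left, Finset.disjoint_union_right,
        Finset.disjoint_union_right]
      exact ⟨⟨hdAL, hdAR⟩, hdBL, hdBR⟩
    have h1 : ((A ∪ B) ∪ (L ∪ R)).card = (Finset.univ : Finset (Fin (p+q))).card := by rw [hU]
    rw [Finset.card_union_of_disjoint hd2, Finset.card_union_of_disjoint hdAB,
      Finset.card_union_of_disjoint hdLR] at h1
    simpa using h1
  have hbal : A.card + q = B.card + p := γ.balance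
  have hPLset : (Finset.univ.filter fun i => γ.IsPlusOrLeft i) = A ∪ L := by
    ext i
    simp only [hA, hL, Finset.mem_union, Finset.mem_filter, Finset.mem_univ, true_and]
    rfl
  rw [hPLset, Finset.card_union_of_disjoint hdAL]
  omega

/-- The key combinatorial property: the plus-or-left nodes are exactly the
first `p` nodes. -/
def HPL (γ : Clan p q) : Prop := ∀ i : Fin (p + q), γ.IsPlusOrLeft i ↔ (i : ℕ) < p

lemma v_id_iff (γ : Clan p q) :
    (∀ i : Fin (p + q), γ.vFun i = (i : ℕ) + 1) ↔ HPL γ := by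
  constructor
  · intro hv
    have hnotPL : ∀ i : Fin (p + q), ¬ γ.IsPlusOrLeft i → p ≤ (i : ℕ) := by
      intro i hi
      have := hv i
      unfold vFun at this
      rw [if_neg hi] at this
      omega
    intro i
    constructor
    · intro hPLi
      by_contra hip
      push_neg at hip
      have hvi := hv i
      unfold vFun at hvi
      rw [if_pos hPLi] at hvi
      have hc : (Finset.univ.filter fun j => γ.IsPlusOrLeft j ∧ j < i).card = (i : ℕ) := by
        omega
      have hsub : insert i (Finset.univ.filter fun j => γ.IsPlusOrLeft j ∧ j < i)
          ⊆ Finset.univ.filter fun j => γ.IsPlusOrLeft j := by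
        intro x hx
        rcases Finset.mem_insert.1 hx with rfl | hx
        · simp [hPLi]
        · simp only [Finset.mem_filter] at hx ⊢
          exact ⟨hx.1, hx.2.1⟩
      have hle := Finset.card_le_card hsub
      rw [Finset.card_insert_of_notMem (by simp), hc, card_PL γ] at hle
      omega
    · intro hip
      by_contra hPLi
      exact absurd (hnotPL i hPLi) (by omega)
  · intro h i
    unfold vFun
    by_cases hi : γ.IsPlusOrLeft i
    · rw [if_pos hi]
      have hip : (i : ℕ) < p := (h i).1 hi
      have : (Finset.univ.filter fun j => γ.IsPlusOrLeft j ∧ j < i)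
          = Finset.univ.filter fun j : Fin (p + q) => (j : ℕ) < (i : ℕ) := by
        ext j
        simp only [Finset.mem_filter, Finset.mem_univ, true_and, h j, Fin.lt_def]
        omega
      rw [this, card_filter_lt _ (by omega)]
      omega
    · rw [if_neg hi]
      have hip : p ≤ (i : ℕ) := by
        by_contra hc; exact hi ((h i).2 (by omega))
      have : (Finset.univ.filter fun j => ¬ γ.IsPlusOrLeft j ∧ j < i)
          = Finset.univ.filter fun j : Fin (p + q) => p ≤ (j : ℕ) ∧ (j : ℕ) < (i : ℕ) := by
        ext j
        simp only [Finset.mem_filter, Finset.mem_univ, true_and, h j, Fin.lt_def]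
        omega
      rw [this, card_filter_between p (i : ℕ) hip (by omega)]
      omega

end Clan
end ClanPaper
namespace ClanPaper
namespace Clan

variable {p q : ℕ}

lemma vCount_eq (γ : Clan p q) (h : HPL γ) (s : Fin (p + q)) :
    γ.vCount s = min p (s : ℕ) := by
  unfold vCount
  have heq : (Finset.univ.filter fun t => γ.IsPlusOrLeft t ∧ t < s)
      = Finset.univ.filter fun t : Fin (p + q) => (t : ℕ) < min p (s : ℕ) := by
    ext t
    simp only [Finset.mem_filter, Finset.mem_univ, true_and, h t, Fin.lt_def]
    omega
  rw [heq, card_filter_lt _ (by omega)]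

lemma shape_eq (γ : Clan p q) (h : HPL γ) {i : ℕ} (hi : i < p) : γ.shape i = q := by
  unfold shape
  have heq : (Finset.univ.filter fun s : Fin (p + q) => ¬ γ.IsPlusOrLeft s ∧ i < γ.vCount s)
      = Finset.univ.filter fun s : Fin (p + q) => p ≤ (s : ℕ) := by
    ext s
    simp only [Finset.mem_filter, Finset.mem_univ, true_and, h s, vCount_eq γ h s]
    omega
  rw [heq, card_filter_ge p (by omega)]
  omega

lemma inLambda_all (γ : Clan p q) (h : HPL γ) (i : Fin p) (j : Fin q) :
    γ.InLambda i j := by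
  unfold InLambda
  rw [shape_eq γ h i.isLt]
  exact j.isLt

lemma colOf_eq (γ : Clan p q) (h : HPL γ) (s : Fin (p + q)) (hs : p ≤ (s : ℕ)) :
    γ.colOf s = q - 1 - ((s : ℕ) - p) := by
  unfold colOf
  have heq : (Finset.univ.filter fun t : Fin (p + q) => ¬ γ.IsPlusOrLeft t ∧ t < s)
      = Finset.univ.filter fun t : Fin (p + q) => p ≤ (t : ℕ) ∧ (t : ℕ) < (s : ℕ) := by
    ext t
    simp only [Finset.mem_filter, Finset.mem_univ, true_and, h t, Fin.lt_def]
    omega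
  rw [heq, card_filter_between p (s : ℕ) hs (by omega)]

/-- The tile of the "diagonal" (rainbow) BPD fragment. -/
def diagT (p q : ℕ) (i : Fin p) (j : Fin q) : Tile :=
  if (i : ℕ) = (j : ℕ) then Tile.se else if (i : ℕ) < (j : ℕ) then Tile.horiz else Tile.vert

/-- The diagonal (rainbow) BPD fragment data. -/
def diagD (p q : ℕ) : FragData p q :=
  ⟨fun i j => diagT p q i j,
   fun i j => if (j : ℕ) ≤ (i : ℕ) then some (Fin.castLE (Nat.le_add_left q p) j) else none,
   fun i j => if (i : ℕ) ≤ (j : ℕ) then some (Fin.castLE (Nat.le_add_right p q) i) else none⟩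

lemma diagT_cases (i : Fin p) (j : Fin q) :
    diagT p q i j = Tile.se ∧ (i : ℕ) = (j : ℕ) ∨
    diagT p q i j = Tile.horiz ∧ (i : ℕ) < (j : ℕ) ∨
    diagT p q i j = Tile.vert ∧ (j : ℕ) < (i : ℕ) := by
  unfold diagT
  rcases Nat.lt_trichotomy (i : ℕ) (j : ℕ) with hc | hc | hc
  · rw [if_neg (by omega), if_pos hc]; exact Or.inr (Or.inl ⟨rfl, hc⟩)
  · rw [if_pos hc]; exact Or.inl ⟨rfl, hc⟩
  · rw [if_neg (by omega), if_neg (by omega)]; exact Or.inr (Or.inr ⟨rfl, hc⟩)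

lemma diagD_T (i : Fin p) (j : Fin q) : (diagD p q).T i j = diagT p q i j := rfl

lemma diagD_H (i : Fin p) (j : Fin q) :
    (diagD p q).H i j =
      if (i : ℕ) ≤ (j : ℕ) then some (Fin.castLE (Nat.le_add_right p q) i) else none := rfl

lemma diagD_V (i : Fin p) (j : Fin q) :
    (diagD p q).V i j =
      if (j : ℕ) ≤ (i : ℕ) then some (Fin.castLE (Nat.le_add_left q p) j) else none := rfl

lemma diagD_east (i : Fin p) (j : Fin q) :
    (diagD p q).east i j =
      if (i : ℕ) ≤ (j : ℕ) then some (Fin.castLE (Nat.le_add_right p q) i) else none := by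
  unfold FragData.east
  rw [diagD_T, diagD_H]
  rcases diagT_cases i j with ⟨ht, hc⟩ | ⟨ht, hc⟩ | ⟨ht, hc⟩ <;> rw [ht] <;>
    simp only [Tile.eastSel] <;> split_ifs <;> first | rfl | (exfalso; omega) | simp_all

lemma diagD_west (i : Fin p) (j : Fin q) :
    (diagD p q).west i j =
      if (i : ℕ) < (j : ℕ) then some (Fin.castLE (Nat.le_add_right p q) i) else none := by
  unfold FragData.west
  rw [diagD_T, diagD_H]
  rcases diagT_cases i j with ⟨ht, hc⟩ | ⟨ht, hc⟩ | ⟨ht, hc⟩ <;> rw [ht] <;>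
    simp only [Tile.westSel] <;> split_ifs <;> first | rfl | (exfalso; omega) | simp_all

lemma diagD_south (i : Fin p) (j : Fin q) :
    (diagD p q).south i j =
      if (j : ℕ) ≤ (i : ℕ) then some (Fin.castLE (Nat.le_add_left q p) j) else none := by
  unfold FragData.south
  rw [diagD_T, diagD_V]
  rcases diagT_cases i j with ⟨ht, hc⟩ | ⟨ht, hc⟩ | ⟨ht, hc⟩ <;> rw [ht] <;>
    simp only [Tile.southSel] <;> split_ifs <;> first | rfl | (exfalso; omega) | simp_all

lemma diagD_north (i : Fin p) (j : Fin q) :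
    (diagD p q).north i j =
      if (j : ℕ) < (i : ℕ) then some (Fin.castLE (Nat.le_add_left q p) j) else none := by
  unfold FragData.north
  rw [diagD_T, diagD_V]
  rcases diagT_cases i j with ⟨ht, hc⟩ | ⟨ht, hc⟩ | ⟨ht, hc⟩ <;> rw [ht] <;>
    simp only [Tile.northSel] <;> split_ifs <;> first | rfl | (exfalso; omega) | simp_all

end Clan
end ClanPaper
namespace ClanPaper
namespace Clan

variable {p q : ℕ}

lemma eastSel_diagT (i : Fin p) (j : Fin q) :
    (diagT p q i j).eastSel = true ↔ (i : ℕ) ≤ (j : ℕ) := by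
  rcases diagT_cases i j with ⟨ht, hc⟩ | ⟨ht, hc⟩ | ⟨ht, hc⟩ <;> rw [ht] <;>
    simp [Tile.eastSel] <;> omega

lemma westSel_diagT (i : Fin p) (j : Fin q) :
    (diagT p q i j).westSel = true ↔ (i : ℕ) < (j : ℕ) := by
  rcases diagT_cases i j with ⟨ht, hc⟩ | ⟨ht, hc⟩ | ⟨ht, hc⟩ <;> rw [ht] <;>
    simp [Tile.westSel] <;> omega

lemma southSel_diagT (i : Fin p) (j : Fin q) :
    (diagT p q i j).southSel = true ↔ (j : ℕ) ≤ (i : ℕ) := by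
  rcases diagT_cases i j with ⟨ht, hc⟩ | ⟨ht, hc⟩ | ⟨ht, hc⟩ <;> rw [ht] <;>
    simp [Tile.southSel] <;> omega

lemma northSel_diagT (i : Fin p) (j : Fin q) :
    (diagT p q i j).northSel = true ↔ (j : ℕ) < (i : ℕ) := by
  rcases diagT_cases i j with ⟨ht, hc⟩ | ⟨ht, hc⟩ | ⟨ht, hc⟩ <;> rw [ht] <;>
    simp [Tile.northSel] <;> omega

lemma hasH_diagT (i : Fin p) (j : Fin q) :
    (diagT p q i j).hasH = true ↔ (i : ℕ) ≤ (j : ℕ) := by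
  rcases diagT_cases i j with ⟨ht, hc⟩ | ⟨ht, hc⟩ | ⟨ht, hc⟩ <;> rw [ht] <;>
    simp [Tile.hasH] <;> omega

lemma hasV_diagT (i : Fin p) (j : Fin q) :
    (diagT p q i j).hasV = true ↔ (j : ℕ) ≤ (i : ℕ) := by
  rcases diagT_cases i j with ⟨ht, hc⟩ | ⟨ht, hc⟩ | ⟨ht, hc⟩ <;> rw [ht] <;>
    simp [Tile.hasV] <;> omega

lemma forced (γ : Clan p q) (h : HPL γ) (d : FragData p q) (hd : IsFragment γ d)
    (hne : ∀ (i : Fin p) (j : Fin q), d.T i j ≠ Tile.empty) : d = diagD p q := by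
  obtain ⟨h1, h2, h3, h4, h5, h6, h7, h8, h9⟩ := hd
  have selVn : ∀ t : Tile, t.northSel = true → t.hasV = true := by
    intro t; cases t <;> simp [Tile.northSel, Tile.hasV]
  have selVs : ∀ t : Tile, t.southSel = true → t.hasV = true := by
    intro t; cases t <;> simp [Tile.southSel, Tile.hasV]
  have selHe : ∀ t : Tile, t.eastSel = true → t.hasH = true := by
    intro t; cases t <;> simp [Tile.eastSel, Tile.hasH]
  have selHw : ∀ t : Tile, t.westSel = true → t.hasH = true := by
    intro t; cases t <;> simp [Tile.westSel, Tile.hasH]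
  have hnorth : ∀ (i : Fin p) (j : Fin q),
      (d.north i j ≠ none ↔ (d.T i j).northSel = true) := by
    intro i j
    unfold FragData.north
    by_cases hs : (d.T i j).northSel = true
    · rw [if_pos hs]
      simp only [hs, iff_true]
      exact (h2 i j).1.2 (selVn _ hs)
    · rw [if_neg hs]; simp [hs]
  have hsouth : ∀ (i : Fin p) (j : Fin q),
      (d.south i j ≠ none ↔ (d.T i j).southSel = true) := by
    intro i j
    unfold FragData.south
    by_cases hs : (d.T i j).southSel = true
    · rw [if_pos hs]
      simp only [hs, iff_true]
      exact (h2 i j).1.2 (selVs _ hs)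
    · rw [if_neg hs]; simp [hs]
  have heast : ∀ (i : Fin p) (j : Fin q),
      (d.east i j ≠ none ↔ (d.T i j).eastSel = true) := by
    intro i j
    unfold FragData.east
    by_cases hs : (d.T i j).eastSel = true
    · rw [if_pos hs]
      simp only [hs, iff_true]
      exact (h2 i j).2.2 (selHe _ hs)
    · rw [if_neg hs]; simp [hs]
  have hwest : ∀ (i : Fin p) (j : Fin q),
      (d.west i j ≠ none ↔ (d.T i j).westSel = true) := by
    intro i j
    unfold FragData.west
    by_cases hs : (d.T i j).westSel = true
    · rw [if_pos hs]
      simp only [hs, iff_true]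
      exact (h2 i j).2.2 (selHw _ hs)
    · rw [if_neg hs]; simp [hs]
  have hT : ∀ N (i : Fin p) (j : Fin q), (i : ℕ) + (j : ℕ) = N →
      d.T i j = diagT p q i j := by
    intro N
    induction N using Nat.strong_induction_on with
    | _ N IH =>
    intro i j hN
    have hnor : d.north i j ≠ none ↔ (j : ℕ) < (i : ℕ) := by
      rcases Nat.eq_zero_or_pos (i : ℕ) with h0 | h0
      · rw [h7 i j h0]; simp; omega
      · have hlt : (i : ℕ) - 1 < p := by have := i.isLt; omega
        have hadj := h5 ⟨(i : ℕ) - 1, hlt⟩ i j (by simp; omega) (inLambda_all γ h i j)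
        have hTi' : d.T ⟨(i : ℕ) - 1, hlt⟩ j = diagT p q ⟨(i : ℕ) - 1, hlt⟩ j :=
          IH (((i : ℕ) - 1) + (j : ℕ)) (by omega) _ _ rfl
        rw [← hadj, hsouth ⟨(i : ℕ) - 1, hlt⟩ j, hTi', southSel_diagT]
        simp
        omega
    have hwes : d.west i j ≠ none ↔ (i : ℕ) < (j : ℕ) := by
      rcases Nat.eq_zero_or_pos (j : ℕ) with h0 | h0
      · rw [h6 i j h0]; simp; omega
      · have hlt : (j : ℕ) - 1 < q := by have := j.isLt; omega
        have hadj := h4 i ⟨(j : ℕ) - 1, hlt⟩ j (by simp; omega) (inLambda_all γ h i j)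
        have hTj' : d.T i ⟨(j : ℕ) - 1, hlt⟩ = diagT p q i ⟨(j : ℕ) - 1, hlt⟩ :=
          IH ((i : ℕ) + ((j : ℕ) - 1)) (by omega) _ _ rfl
        rw [← hadj, heast i ⟨(j : ℕ) - 1, hlt⟩, hTj', eastSel_diagT]
        simp
        omega
    have hns := (hnorth i j).symm.trans hnor
    have hws := (hwest i j).symm.trans hwes
    have hemp := hne i j
    rcases ht : d.T i j with _ | _ | _ | _ | _ | _
    · exact absurd ht hemp
    · rw [ht] at hns hws
      simp [Tile.northSel, Tile.westSel] at hns hws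
      unfold diagT
      rw [if_neg (by omega), if_pos (by omega)]
    · rw [ht] at hns hws
      simp [Tile.northSel, Tile.westSel] at hns hws
      unfold diagT
      rw [if_neg (by omega), if_neg (by omega)]
    · rw [ht] at hns hws
      simp [Tile.northSel, Tile.westSel] at hns hws
      exact absurd (lt_trans hns hws) (lt_irrefl _)
    · rw [ht] at hns hws
      simp [Tile.northSel, Tile.westSel] at hns hws
      unfold diagT
      rw [if_pos (by omega)]
    · rw [ht] at hns hws
      simp [Tile.northSel, Tile.westSel] at hns hws
      exact absurd (lt_trans hns hws) (lt_irrefl _)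
  have hTT : ∀ (i : Fin p) (j : Fin q), d.T i j = diagT p q i j := fun i j => hT _ i j rfl
  have hHc : ∀ N (j : Fin q), q - 1 - (j : ℕ) = N → ∀ i : Fin p, (i : ℕ) ≤ (j : ℕ) →
      d.H i j = some (Fin.castLE (Nat.le_add_right p q) i) := by
    intro N
    induction N using Nat.strong_induction_on with
    | _ N IH =>
    intro j hN i hij
    have hsel : (d.T i j).eastSel = true := by
      rw [hTT i j]; exact (eastSel_diagT i j).2 hij
    have heH : d.east i j = d.H i j := by
      unfold FragData.east; rw [if_pos hsel]
    have hHn : d.H i j ≠ none :=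
      (h2 i j).2.2 (by rw [hTT i j]; exact (hasH_diagT i j).2 hij)
    by_cases hj : (j : ℕ) = q - 1
    · have h8' := h8 i j (Fin.castLE (Nat.le_add_right p q) i) (inLambda_all γ h i j)
        (by rw [shape_eq γ h i.isLt]; have := j.isLt; omega)
        ((h _).2 (by simpa using i.isLt))
        (by rw [vCount_eq γ h]; simp only [Fin.coe_castLE]; have := i.isLt; omega)
      rw [heH] at h8'
      rcases em (γ.m (Fin.castLE (Nat.le_add_right p q) i)
          = Fin.castLE (Nat.le_add_right p q) i) with hm | hm
      · rw [if_pos hm] at h8'; exact absurd h8' hHn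
      · rw [if_neg hm] at h8'; exact h8'
    · have hlt : (j : ℕ) + 1 < q := by have := j.isLt; omega
      have h4' := h4 i j ⟨(j : ℕ) + 1, hlt⟩ (by simp) (inLambda_all γ h i _)
      have hwsel : (d.T i ⟨(j : ℕ) + 1, hlt⟩).westSel = true := by
        rw [hTT]; exact (westSel_diagT _ _).2 (by simp; omega)
      have hIH := IH (q - 1 - ((j : ℕ) + 1)) (by omega) ⟨(j : ℕ) + 1, hlt⟩ (by simp) i
        (by simp; omega)
      rw [← heH, h4']
      unfold FragData.west
      rw [if_pos hwsel, hIH]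
  have hHf : ∀ (i : Fin p) (j : Fin q), d.H i j =
      (if (i : ℕ) ≤ (j : ℕ) then some (Fin.castLE (Nat.le_add_right p q) i) else none) := by
    intro i j
    by_cases hij : (i : ℕ) ≤ (j : ℕ)
    · rw [if_pos hij]; exact hHc _ j rfl i hij
    · rw [if_neg hij]
      by_contra hn
      have h' := (h2 i j).2.1 hn
      rw [hTT i j] at h'
      exact absurd ((hasH_diagT i j).1 h') hij
  have hVc : ∀ N (i : Fin p), (i : ℕ) = N → ∀ j : Fin q, (j : ℕ) ≤ (i : ℕ) →
      d.V i j = some (Fin.castLE (Nat.le_add_left q p) j) := by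
    intro N
    induction N using Nat.strong_induction_on with
    | _ N IH =>
    intro i hN j hji
    by_cases hij : (i : ℕ) = (j : ℕ)
    · have hse : d.T i j = Tile.se := by rw [hTT]; unfold diagT; rw [if_pos hij]
      have h3' := h3 i j (Or.inl hse)
      rw [h3', hHf, if_pos (by omega)]
      congr 1
      exact Fin.ext (by simpa using hij)
    · have hlt : (i : ℕ) - 1 < p := by have := i.isLt; omega
      have h5' := h5 ⟨(i : ℕ) - 1, hlt⟩ i j (by simp; omega) (inLambda_all γ h i j)
      have hnsel : (d.T i j).northSel = true := by
        rw [hTT]; exact (northSel_diagT i j).2 (by omega)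
      have hssel : (d.T ⟨(i : ℕ) - 1, hlt⟩ j).southSel = true := by
        rw [hTT]; exact (southSel_diagT _ _).2 (by simp; omega)
      have hIH := IH ((i : ℕ) - 1) (by omega) ⟨(i : ℕ) - 1, hlt⟩ (by simp) j (by simp; omega)
      have e1 : d.north i j = d.V i j := by unfold FragData.north; rw [if_pos hnsel]
      have e2 : d.south ⟨(i : ℕ) - 1, hlt⟩ j = d.V ⟨(i : ℕ) - 1, hlt⟩ j := by
        unfold FragData.south; rw [if_pos hssel]
      rw [← e1, ← h5', e2, hIH]
  have hVf : ∀ (i : Fin p) (j : Fin q), d.V i j =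
      (if (j : ℕ) ≤ (i : ℕ) then some (Fin.castLE (Nat.le_add_left q p) j) else none) := by
    intro i j
    by_cases hji : (j : ℕ) ≤ (i : ℕ)
    · rw [if_pos hji]; exact hVc _ i rfl j hji
    · rw [if_neg hji]
      by_contra hn
      have h' := (h2 i j).1.1 hn
      rw [hTT i j] at h'
      exact absurd ((hasV_diagT i j).1 h') hji
  refine Prod.ext ?_ (Prod.ext ?_ ?_)
  · funext i j; exact hTT i j
  · funext i j; exact hVf i j
  · funext i j; exact hHf i j

end Clan
end ClanPaper
namespace ClanPaper
namespace Clan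

variable {p q : ℕ}

lemma eval_wt_zero (γ : Clan p q) (d : FragData p q) :
    MvPolynomial.eval (fun _ => (0 : ℤ)) (γ.wt d) =
      if (Finset.univ.filter fun x : Fin p × Fin q =>
          γ.InLambda x.1 x.2 ∧ d.T x.1 x.2 = Tile.empty) = ∅ then 1 else 0 := by
  unfold wt
  rw [map_prod]
  split_ifs with hS
  · rw [hS, Finset.prod_empty]
  · obtain ⟨x, hx⟩ := Finset.nonempty_iff_ne_empty.2 hS
    apply Finset.prod_eq_zero hx
    simp

lemma eval_clanPoly (γ : Clan p q) :
    MvPolynomial.eval (fun _ => (0 : ℤ)) γ.clanPoly =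
      ((Finset.univ.filter fun π : γ.Fragment =>
        (Finset.univ.filter fun x : Fin p × Fin q =>
          γ.InLambda x.1 x.2 ∧ π.1.T x.1 x.2 = Tile.empty) = ∅).card : ℤ) := by
  unfold clanPoly
  rw [map_sum, Finset.sum_congr rfl (fun π _ => eval_wt_zero γ π.1), Finset.sum_boole]

lemma hPL_of_rainbow (γ : Clan p q) (hr : γ.IsRainbow) : HPL γ := by
  obtain ⟨hr1, hr2⟩ := hr
  intro i
  by_cases h1 : (i : ℕ) < min p q
  · have hm := hr1 i (Or.inl h1)
    have hilt : (i : ℕ) < (γ.m i : ℕ) := by have := i.isLt; omega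
    exact iff_of_true (Or.inr hilt) (by omega)
  · by_cases h2 : (i : ℕ) < p + q - min p q
    · obtain ⟨hm, hs⟩ := hr2 i (by omega) h2
      have hnl : ¬ (i < γ.m i) := by rw [hm]; exact lt_irrefl _
      constructor
      · rintro (⟨-, hsi⟩ | hlt)
        · rw [hs] at hsi
          have : q < p := of_decide_eq_true hsi
          omega
        · exact absurd hlt hnl
      · intro hip
        have hqp : q < p := by omega
        exact Or.inl ⟨hm, by rw [hs]; simp [hqp]⟩
    · have hm := hr1 i (Or.inr (by omega))
      have hgt : (γ.m i : ℕ) < (i : ℕ) := by have := i.isLt; omega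
      refine iff_of_false ?_ (by have := i.isLt; omega)
      rintro (⟨heq, -⟩ | hlt)
      · rw [heq] at hgt; exact absurd hgt (lt_irrefl _)
      · exact absurd (lt_trans hlt hgt) (lt_irrefl _)

end Clan
end ClanPaper
namespace ClanPaper
namespace Clan

variable {p q : ℕ}

lemma isFragment_diagD (γ : Clan p q) (h : HPL γ) (hr : γ.IsRainbow) :
    IsFragment γ (diagD p q) := by
  obtain ⟨hr1, hr2⟩ := hr
  refine ⟨?_, ?_, ?_, ?_, ?_, ?_, ?_, ?_, ?_⟩
  · intro i j hij; exact absurd (inLambda_all γ h i j) hij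
  · intro i j
    constructor
    · rw [diagD_T, diagD_V]
      by_cases hji : (j : ℕ) ≤ (i : ℕ)
      · rw [if_pos hji]
        simp only [ne_eq, reduceCtorEq, not_false_eq_true, true_iff]
        exact (hasV_diagT i j).2 hji
      · rw [if_neg hji]
        constructor
        · intro hc; exact absurd rfl hc
        · intro hc; exact absurd ((hasV_diagT i j).1 hc) hji
    · rw [diagD_T, diagD_H]
      by_cases hij : (i : ℕ) ≤ (j : ℕ)
      · rw [if_pos hij]
        simp only [ne_eq, reduceCtorEq, not_false_eq_true, true_iff]
        exact (hasH_diagT i j).2 hij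
      · rw [if_neg hij]
        constructor
        · intro hc; exact absurd rfl hc
        · intro hc; exact absurd ((hasH_diagT i j).1 hc) hij
  · intro i j hor
    rcases diagT_cases i j with ⟨ht, hc⟩ | ⟨ht, hc⟩ | ⟨ht, hc⟩
    · rw [diagD_V, diagD_H, if_pos (by omega), if_pos (by omega)]
      congr 1
      exact Fin.ext (by simp [hc])
    · rcases hor with h' | h' <;> rw [diagD_T, ht] at h' <;> simp at h'
    · rcases hor with h' | h' <;> rw [diagD_T, ht] at h' <;> simp at h'
  · intro i j j' hj' _
    rw [diagD_east, diagD_west]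
    split_ifs <;> first | rfl | (exfalso; omega)
  · intro i i' j hi' _
    rw [diagD_south, diagD_north]
    split_ifs <;> first | rfl | (exfalso; omega)
  · intro i j hj
    rw [diagD_west, if_neg (by omega)]
  · intro i j hi
    rw [diagD_north, if_neg (by omega)]
  · intro i j t _ hshape hPLt hvc
    rw [shape_eq γ h i.isLt] at hshape
    have htv : (t : ℕ) = (i : ℕ) := by
      have h1 := (h t).1 hPLt
      rw [vCount_eq γ h] at hvc
      omega
    rw [diagD_east]
    by_cases hiq : (i : ℕ) < min p q
    · have hm := hr1 t (Or.inl (by omega))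
      have hmne : γ.m t ≠ t := by
        intro hc; rw [hc] at hm; omega
      rw [if_neg hmne, if_pos (by omega)]
      congr 1
      exact Fin.ext (by simp [htv])
    · have hm := (hr2 t (by omega) (by have := i.isLt; omega)).1
      rw [if_pos hm, if_neg (by have := i.isLt; have := j.isLt; omega)]
  · intro i j s _ hlast hnPL hcol
    have hip : (i : ℕ) + 1 ≥ p := by
      by_contra hc
      exact hlast ⟨(i : ℕ) + 1, by omega⟩ (by simp) (inLambda_all γ h _ j)
    have hsp : p ≤ (s : ℕ) := by
      by_contra hc; exact hnPL ((h s).2 (by omega))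
    rw [colOf_eq γ h s hsp] at hcol
    have hsv : (s : ℕ) = p + q - 1 - (j : ℕ) := by
      have := s.isLt; have := j.isLt; omega
    have hi1 : (i : ℕ) = p - 1 := by have := i.isLt; omega
    rw [diagD_south]
    by_cases hjp : (j : ℕ) < p
    · have hm := hr1 s (Or.inr (by have := j.isLt; omega))
      have hmne : γ.m s ≠ s := by
        intro hc; rw [hc] at hm; have := j.isLt; omega
      rw [if_pos (by omega), if_neg hmne]
      congr 1
      exact Fin.ext (by simp; omega)
    · have hm := (hr2 s (by omega) (by have := j.isLt; omega)).1
      rw [if_pos hm, if_neg (by omega)]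

lemma rainbow_of (γ : Clan p q) (h : HPL γ) (hfrag : IsFragment γ (diagD p q)) :
    γ.IsRainbow := by
  by_cases hdeg : p = 0 ∨ q = 0
  · have hid : ∀ i, γ.m i = i := by
      rcases hdeg with hp | hq
      · have hnPL : ∀ i : Fin (p + q), ¬ (i < γ.m i) := by
          intro i hc
          exact absurd ((h i).1 (Or.inr hc)) (by omega)
        intro i
        rcases lt_trichotomy (γ.m i) i with hc | hc | hc
        · exact absurd (show γ.m i < γ.m (γ.m i) by rw [γ.invol]; exact hc) (hnPL _)
        · exact hc
        · exact absurd hc (hnPL i)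
      · have hPLa : ∀ i : Fin (p + q), γ.IsPlusOrLeft i :=
          fun i => (h i).2 (by have := i.isLt; omega)
        have hnR : ∀ i : Fin (p + q), ¬ (γ.m i < i) := by
          intro i hc
          rcases hPLa i with ⟨he, -⟩ | hlt
          · rw [he] at hc; exact lt_irrefl _ hc
          · exact lt_irrefl _ (lt_trans hc hlt)
        intro i
        rcases lt_trichotomy (γ.m i) i with hc | hc | hc
        · exact absurd hc (hnR i)
        · exact hc
        · exact absurd (show γ.m (γ.m i) < γ.m i by rw [γ.invol]; exact hc) (hnR _)
    constructor
    · intro i hi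
      rcases hi with hi | hi
      · omega
      · have := i.isLt; omega
    · intro i _ _
      refine ⟨hid i, ?_⟩
      rcases hdeg with hp | hq
      · have hnPLi : ¬ γ.IsPlusOrLeft i := by rw [h i]; omega
        have hsf : γ.sign i ≠ true := fun hc => hnPLi (Or.inl ⟨hid i, hc⟩)
        have hsi : γ.sign i = false := by
          cases hs : γ.sign i
          · rfl
          · exact absurd hs hsf
        rw [hsi, hp]; simp
      · have hPLi := (h i).2 (by have := i.isLt; omega)
        have hst : γ.sign i = true := by
          rcases hPLi with ⟨-, hs⟩ | hlt
          · exact hs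
          · rw [hid i] at hlt; exact absurd hlt (lt_irrefl _)
        have hp0 : 0 < p := by have := i.isLt; omega
        rw [hst, hq]
        simp [hp0]
  · push_neg at hdeg
    obtain ⟨hp, hq⟩ := hdeg
    obtain ⟨h1, h2, h3, h4, h5, h6, h7, h8, h9⟩ := hfrag
    have hp0 : 0 < p := Nat.pos_of_ne_zero hp
    have hq0 : 0 < q := Nat.pos_of_ne_zero hq
    have key1 : ∀ (s : Fin (p + q)) (k : ℕ), k < min p q → (s : ℕ) = p + q - 1 - k →
        (γ.m s : ℕ) = k := by
      intro s k hk hsk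
      have h9' := h9 ⟨p - 1, by omega⟩ ⟨k, by omega⟩ s
        (inLambda_all γ h _ _)
        (fun i' hi' => absurd i'.isLt (by simp at hi'; omega))
        (by rw [h s]; simp; omega)
        (by rw [colOf_eq γ h s (by omega)]; simp; omega)
      rw [diagD_south, if_pos (show k ≤ p - 1 by omega)] at h9'
      rcases em (γ.m s = s) with hm | hm
      · rw [if_pos hm] at h9'; exact absurd h9' (by simp)
      · rw [if_neg hm] at h9'
        have := congrArg Fin.val (Option.some.inj h9')
        simpa using this.symm
    have key2 : ∀ t : Fin (p + q), min p q ≤ (t : ℕ) → (t : ℕ) < p → γ.m t = t := by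
      intro t hmint htp
      have h8' := h8 ⟨(t : ℕ), htp⟩ ⟨q - 1, by omega⟩ t
        (inLambda_all γ h _ _)
        (by rw [shape_eq γ h htp]; simp; omega)
        ((h t).2 htp)
        (by rw [vCount_eq γ h]; simp; omega)
      rw [diagD_east, if_neg (by simp; omega)] at h8'
      rcases em (γ.m t = t) with hm | hm
      · exact hm
      · rw [if_neg hm] at h8'; exact absurd h8'.symm (by simp)
    have key3 : ∀ s : Fin (p + q), p ≤ (s : ℕ) → (s : ℕ) < p + q - min p q → γ.m s = s := by
      intro s hps hsm
      have h9' := h9 ⟨p - 1, by omega⟩ ⟨p + q - 1 - (s : ℕ), by omega⟩ s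
        (inLambda_all γ h _ _)
        (fun i' hi' => absurd i'.isLt (by simp at hi'; omega))
        (by rw [h s]; omega)
        (by rw [colOf_eq γ h s hps]; simp; have := s.isLt; omega)
      rw [diagD_south, if_neg (show ¬ (p + q - 1 - (s : ℕ) ≤ p - 1) by omega)] at h9'
      rcases em (γ.m s = s) with hm | hm
      · exact hm
      · rw [if_neg hm] at h9'; exact absurd h9'.symm (by simp)
    refine ⟨?_, ?_⟩
    · intro i hi
      rcases hi with hi | hi
      · have hsb : p + q - 1 - (i : ℕ) < p + q := by omega
        have hmv : γ.m ⟨p + q - 1 - (i : ℕ), hsb⟩ = i := by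
          apply Fin.ext
          have := key1 ⟨p + q - 1 - (i : ℕ), hsb⟩ (i : ℕ) hi (by simp)
          simpa using this
        have h' := γ.invol (⟨p + q - 1 - (i : ℕ), hsb⟩ : Fin (p + q))
        rw [hmv] at h'
        rw [h']
      · exact key1 i (p + q - 1 - (i : ℕ)) (by have := i.isLt; omega)
          (by have := i.isLt; omega)
    · intro i hmin hmax
      by_cases hip : (i : ℕ) < p
      · have hm := key2 i hmin hip
        have hqp : q < p := by omega
        refine ⟨hm, ?_⟩
        have hPLi := (h i).2 hip
        rcases hPLi with ⟨-, hs⟩ | hlt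
        · rw [hs]; simp [hqp]
        · rw [hm] at hlt; exact absurd hlt (lt_irrefl _)
      · have hm := key3 i (by omega) hmax
        have hpq : ¬ (q < p) := by omega
        refine ⟨hm, ?_⟩
        have hnPLi : ¬ γ.IsPlusOrLeft i := by rw [h i]; omega
        have hsf : γ.sign i ≠ true := fun hc => hnPLi (Or.inl ⟨hm, hc⟩)
        have hsi : γ.sign i = false := by
          cases hs : γ.sign i
          · rfl
          · exact absurd hs hsf
        rw [hsi]
        simp [hpq]

end Clan
end ClanPaper

open ClanPaper in
/-- For a `(p,q)`-clan `γ`: `v_γ = id` and `𝔰_γ(0) = 1`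
(the clan polynomial specialized at `y = 0`) hold if and only if `γ` is the
rainbow clan. -/
theorem rainbow_characterization {p q : ℕ} (γ : Clan p q) :
    ((∀ i : Fin (p + q), γ.vFun i = (i : ℕ) + 1) ∧
      MvPolynomial.eval (fun _ => (0 : ℤ)) γ.clanPoly = 1) ↔ γ.IsRainbow := by
  constructor
  · rintro ⟨hv, he⟩
    have h : γ.HPL := (Clan.v_id_iff γ).1 hv
    rw [Clan.eval_clanPoly γ] at he
    have hcard : (Finset.univ.filter fun π : γ.Fragment =>
        (Finset.univ.filter fun x : Fin p × Fin q =>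
          γ.InLambda x.1 x.2 ∧ π.1.T x.1 x.2 = Clan.Tile.empty) = ∅).card = 1 := by
      exact_mod_cast he
    obtain ⟨π, hπ⟩ := Finset.card_eq_one.1 hcard
    have hmem : π ∈ (Finset.univ.filter fun π : γ.Fragment =>
        (Finset.univ.filter fun x : Fin p × Fin q =>
          γ.InLambda x.1 x.2 ∧ π.1.T x.1 x.2 = Clan.Tile.empty) = ∅) :=
      hπ ▸ Finset.mem_singleton_self π
    rw [Finset.mem_filter] at hmem
    have hc := hmem.2
    rw [Finset.eq_empty_iff_forall_notMem] at hc
    have hne : ∀ (i : Fin p) (j : Fin q), π.1.T i j ≠ Clan.Tile.empty := by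
      intro i j hcc
      exact hc ⟨i, j⟩ (Finset.mem_filter.2
        ⟨Finset.mem_univ _, Clan.inLambda_all γ h i j, hcc⟩)
    have hdiag := Clan.forced γ h π.1 π.2 hne
    exact Clan.rainbow_of γ h (hdiag ▸ π.2)
  · intro hr
    have h : γ.HPL := Clan.hPL_of_rainbow γ hr
    refine ⟨(Clan.v_id_iff γ).2 h, ?_⟩
    rw [Clan.eval_clanPoly γ]
    have hfr : Clan.IsFragment γ (Clan.diagD p q) := Clan.isFragment_diagD γ h hr
    have hset : (Finset.univ.filter fun π : γ.Fragment =>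
        (Finset.univ.filter fun x : Fin p × Fin q =>
          γ.InLambda x.1 x.2 ∧ π.1.T x.1 x.2 = Clan.Tile.empty) = ∅)
        = @singleton γ.Fragment (Finset γ.Fragment) _ ⟨Clan.diagD p q, hfr⟩ := by
      ext π
      refine (Finset.mem_filter.trans ?_).trans Finset.mem_singleton.symm
      constructor
      · rintro ⟨-, hc⟩
        rw [Finset.eq_empty_iff_forall_notMem] at hc
        have hne : ∀ (i : Fin p) (j : Fin q), π.1.T i j ≠ Clan.Tile.empty := by
          intro i j hcc
          exact hc ⟨i, j⟩ (Finset.mem_filter.2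
            ⟨Finset.mem_univ _, Clan.inLambda_all γ h i j, hcc⟩)
        exact Subtype.ext (Clan.forced γ h π.1 π.2 hne)
      · rintro rfl
        refine ⟨Finset.mem_univ _, ?_⟩
        rw [Finset.eq_empty_iff_forall_notMem]
        rintro ⟨i, j⟩ hmm
        rw [Finset.mem_filter] at hmm
        have hcc := hmm.2.2
        rw [Clan.diagD_T] at hcc
        rcases Clan.diagT_cases i j with ⟨ht, -⟩ | ⟨ht, -⟩ | ⟨ht, -⟩ <;>
          rw [ht] at hcc <;> simp at hcc
    rw [hset]
    exact_mod_cast Finset.card_singleton (α := γ.Fragment) _
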